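/- If a set S of users is feasible, then there exists a non-preemptive schedule serving S, i.e. a schedule σ' serving S such that for every u ∈ S the set of slots {t : σ' t = some u} is a set of consecutive integers. (Lemma 6 of the paper: a preemptive feasible schedule can be transformed into a non-preemptive one without discarding any scheduled user.) -/

import Mathlib

open Finset

lemma aux_gap (B : Finset ℕ) {m : ℕ} (e : Fin m ≃o {x // x ∈ B}) (i j : Fin m)
    (h : i.val ≤ j.val) : (e i : ℕ) + (j.val - i.val) ≤ (e j : ℕ) := by
  obtain ⟨k, hk⟩ := Nat.exists_eq_add_of_le h
  induction k generalizing j with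
  | zero =>
    have : i = j := Fin.ext (by omega)
    subst this; simp
  | succ n ih =>
    have hjn : i.val + n < m := by omega
    set j' : Fin m := ⟨i.val + n, hjn⟩ with hj'
    have h1 : (e i : ℕ) + (j'.val - i.val) ≤ (e j' : ℕ) :=
      ih j' (by simp [hj']) (by simp [hj'])
    have h2 : (e j' : ℕ) < (e j : ℕ) := by
      have : j' < j := by rw [Fin.lt_def]; simp only [hj', Fin.val_mk]; omega
      exact_mod_cast e.lt_iff_lt.mpr this
    simp only [hj', Fin.val_mk] at h1 h2 ⊢
    omega

lemma aux_ge (B : Finset ℕ) {m : ℕ} (e : Fin m ≃o {x // x ∈ B})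
    (hB : ∀ y ∈ B, 1 ≤ y) (i : Fin m) : i.val + 1 ≤ (e i : ℕ) := by
  have h0 : (0 : ℕ) < m := i.pos
  have := aux_gap B e ⟨0, h0⟩ i (Nat.zero_le _)
  have h1 : 1 ≤ (e ⟨0, h0⟩ : ℕ) := hB _ (e ⟨0, h0⟩).2
  simp only [Fin.val_mk] at this h1
  omega

lemma aux_stat (B : Finset ℕ) {m : ℕ} (e : Fin m ≃o {x // x ∈ B}) (i : Fin m) (x : ℕ)
    (h : i.val + 1 ≤ (B.filter (· ≤ x)).card) : (e i : ℕ) ≤ x := by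
  by_contra hx
  push_neg at hx
  have hsub : B.filter (· ≤ x) ⊆
      (Finset.univ.filter (fun j : Fin m => j < i)).image (fun j => (e j : ℕ)) := by
    intro y hy
    rw [mem_filter] at hy
    obtain ⟨hyB, hyx⟩ := hy
    set j := e.symm ⟨y, hyB⟩ with hj
    have hejy : (e j : ℕ) = y := by simp [hj]
    have hji : j < i := by
      rw [← e.lt_iff_lt, ← Subtype.coe_lt_coe]
      omega
    exact mem_image.mpr ⟨j, by simpa, hejy⟩
  have hcard := card_le_card hsub
  have h2 := card_image_le (s := Finset.univ.filter (fun j : Fin m => j < i))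
    (f := fun j => (e j : ℕ))
  have h3 : (Finset.univ.filter (fun j : Fin m => j < i)).card = i.val := by
    have : Finset.univ.filter (fun j : Fin m => j < i) = Finset.Iio i := by
      ext j; simp
    rw [this, Fin.card_Iio]
  omega


/-- A schedule `σ : ℕ → Option (Fin U)` serves the user set `S`:
(i) the users appearing in slots `{1,…,T}` are exactly those of `S`;
(ii) each `u ∈ S` appears in exactly `ν u` slots;
(iii) every slot at which a user `u` appears is at most `d u`;
(iv) for every `t ∈ {1,…,T}`, the number of busy slots in `{1,…,t}` is at most
`∑_{s=1}^{t} A s`. -/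
def Serves (T U : ℕ) (ν d : Fin U → ℕ) (A : ℕ → ℕ)
    (σ : ℕ → Option (Fin U)) (S : Finset (Fin U)) : Prop :=
  (∀ u : Fin U, u ∈ S ↔ ∃ t ∈ Finset.Icc 1 T, σ t = some u) ∧
  (∀ u ∈ S, ((Finset.Icc 1 T).filter (fun t => σ t = some u)).card = ν u) ∧
  (∀ u : Fin U, ∀ t ∈ Finset.Icc 1 T, σ t = some u → t ≤ d u) ∧
  (∀ t ∈ Finset.Icc 1 T,
    ((Finset.Icc 1 t).filter (fun s => σ s ≠ none)).card ≤ ∑ s ∈ Finset.Icc 1 t, A s)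

/-- A user set is feasible if some schedule serves it. -/
def Feasible (T U : ℕ) (ν d : Fin U → ℕ) (A : ℕ → ℕ) (S : Finset (Fin U)) : Prop :=
  ∃ σ : ℕ → Option (Fin U), Serves T U ν d A σ S

/-- Lemma 6: if `S` is feasible, then there is a non-preemptive schedule serving `S`,
i.e. one in which every served user's set of assigned slots is a set of consecutive
integers (an interval `Finset.Icc a b`). -/
theorem stmt4 (T U : ℕ) (ν d : Fin U → ℕ) (A : ℕ → ℕ)
    (hν : ∀ i, 1 ≤ ν i) (hd : ∀ i, d i ∈ Finset.Icc 1 T)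
    (S : Finset (Fin U)) (hfeas : Feasible T U ν d A S) :
    ∃ σ' : ℕ → Option (Fin U), Serves T U ν d A σ' S ∧
      ∀ u ∈ S, ∃ a b : ℕ,
        (Finset.Icc 1 T).filter (fun t => σ' t = some u) = Finset.Icc a b := by
  classical
  obtain ⟨σ, hiff, hcard, hdl, hen⟩ := hfeas
  rcases S.eq_empty_or_nonempty with hS | ⟨u0, hu0⟩
  · subst hS
    refine ⟨fun _ => none, ⟨?_, ?_, ?_, ?_⟩, ?_⟩
    · intro u; simp
    · intro u hu; simp at hu
    · intro u t _ h; simp at h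
    · intro t _; simp
    · intro u hu; simp at hu
  -- main construction
  set B := (Finset.Icc 1 T).filter (fun s => σ s ≠ none) with hBdef
  have hBmem : ∀ y ∈ B, 1 ≤ y ∧ y ≤ T := by
    intro y hy; rw [hBdef, mem_filter, mem_Icc] at hy; exact ⟨hy.1.1, hy.1.2⟩
  have hBsplit : B = S.biUnion (fun u => (Finset.Icc 1 T).filter (fun t => σ t = some u)) := by
    ext s
    simp only [hBdef, mem_filter, mem_biUnion]
    constructor
    · rintro ⟨hs, hne⟩
      obtain ⟨u, hu⟩ := Option.ne_none_iff_exists'.mp hne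
      exact ⟨u, (hiff u).mpr ⟨s, hs, hu⟩, hs, hu⟩
    · rintro ⟨u, _, hs, hsu⟩
      exact ⟨hs, by simp [hsu]⟩
  have hdisjσ : ∀ F : Finset (Fin U), F ⊆ S →
      (F.biUnion (fun u => (Finset.Icc 1 T).filter (fun t => σ t = some u))).card
        = ∑ u ∈ F, ν u := by
    intro F hF
    rw [card_biUnion]
    · exact Finset.sum_congr rfl (fun u hu => hcard u (hF hu))
    · intro u _ v _ huv
      refine Finset.disjoint_left.mpr ?_
      intro s hs hs'
      rw [mem_filter] at hs hs'
      exact huv (by rw [← Option.some_inj, ← hs.2, ← hs'.2])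
  have hBcard : B.card = ∑ u ∈ S, ν u := by
    rw [hBsplit]; exact hdisjσ S (subset_refl S)
  -- key ordering
  set key : Fin U → ℕ := fun u => d u * U + u.val with hkeydef
  have keymono : ∀ u v : Fin U, key u ≤ key v → d u ≤ d v := by
    intro u v h
    by_contra hlt
    push_neg at hlt
    have h1 := v.isLt
    have h2 := u.isLt
    have : key v < key u := by
      have : (d v + 1) * U ≤ d u * U := Nat.mul_le_mul_right _ (by omega)
      simp only [hkeydef]
      nlinarith
    omega
  have keyinj : ∀ u v : Fin U, key u = key v → u = v := by
    intro u v h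
    have h1 : d u ≤ d v := keymono u v h.le
    have h2 : d v ≤ d u := keymono v u h.ge
    have : d u = d v := le_antisymm h1 h2
    simp only [hkeydef, this] at h
    exact Fin.ext (by omega)
  -- cumulative sums
  set C : Fin U → ℕ := fun u => ∑ v ∈ S.filter (fun v => key v ≤ key u), ν v with hCdef
  have hCν : ∀ u ∈ S, ν u ≤ C u := by
    intro u hu
    exact Finset.single_le_sum (f := ν) (fun v _ => Nat.zero_le _)
      (mem_filter.mpr ⟨hu, le_refl _⟩)
  have hCle : ∀ u, C u ≤ B.card := by
    intro u
    rw [hBcard]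
    exact Finset.sum_le_sum_of_subset (Finset.filter_subset _ _)
  have hCmono : ∀ u ∈ S, ∀ v ∈ S, key u < key v → C u + ν v ≤ C v := by
    intro u hu v hv huv
    have hvnot : v ∉ S.filter (fun w => key w ≤ key u) := by
      rw [mem_filter]; push_neg; intro _; omega
    have hins : insert v (S.filter (fun w => key w ≤ key u))
        ⊆ S.filter (fun w => key w ≤ key v) := by
      intro w hw
      rw [Finset.mem_insert] at hw
      rcases hw with rfl | hw
      · exact mem_filter.mpr ⟨hv, le_refl _⟩
      · rw [mem_filter] at hw ⊢; exact ⟨hw.1, by omega⟩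
    calc C u + ν v = ∑ w ∈ insert v (S.filter (fun w => key w ≤ key u)), ν w := by
          rw [Finset.sum_insert hvnot]; simp only [hCdef]; omega
      _ ≤ C v := Finset.sum_le_sum_of_subset hins
  -- order statistics
  set e := B.orderIsoOfFin rfl with hedef
  have hCpos : ∀ u ∈ S, 1 ≤ C u := fun u hu => le_trans (hν u) (hCν u hu)
  have hidx : ∀ u ∈ S, C u - 1 < B.card := by
    intro u hu
    have := hCpos u hu
    have := hCle u
    omega
  set en : Fin U → ℕ := fun u =>
    if h : C u - 1 < B.card then (e ⟨C u - 1, h⟩ : ℕ) else 0 with hendef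
  have henval : ∀ u (hu : u ∈ S), en u = (e ⟨C u - 1, hidx u hu⟩ : ℕ) := by
    intro u hu
    simp only [hendef, dif_pos (hidx u hu)]
  have henB : ∀ u ∈ S, en u ∈ B := by
    intro u hu
    rw [henval u hu]
    exact (e ⟨C u - 1, hidx u hu⟩).2
  have henge : ∀ u ∈ S, C u ≤ en u := by
    intro u hu
    have := aux_ge B e (fun y hy => (hBmem y hy).1) ⟨C u - 1, hidx u hu⟩
    rw [henval u hu]
    have := hCpos u hu
    simp only [Fin.val_mk] at *
    omega
  have hend : ∀ u ∈ S, en u ≤ d u := by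
    intro u hu
    -- count busy slots ≤ d u
    have hsubD : (S.filter (fun v => key v ≤ key u)).biUnion
        (fun v => (Finset.Icc 1 T).filter (fun t => σ t = some v))
        ⊆ B.filter (· ≤ d u) := by
      intro s hs
      rw [Finset.mem_biUnion] at hs
      obtain ⟨v, hv, hs⟩ := hs
      rw [mem_filter] at hs hv ⊢
      refine ⟨?_, ?_⟩
      · rw [hBdef, mem_filter]; exact ⟨hs.1, by simp [hs.2]⟩
      · exact le_trans (hdl v s hs.1 hs.2) (keymono v u hv.2)
    have hcount : C u ≤ (B.filter (· ≤ d u)).card := by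
      have := card_le_card hsubD
      rw [hdisjσ _ (Finset.filter_subset _ _)] at this
      exact this
    rw [henval u hu]
    refine aux_stat B e ⟨C u - 1, hidx u hu⟩ (d u) ?_
    have := hCpos u hu
    simp only [Fin.val_mk]
    omega
  have henT : ∀ u ∈ S, 1 ≤ en u ∧ en u ≤ T := fun u hu => hBmem _ (henB u hu)
  -- gap between distinct users
  have hgap : ∀ u ∈ S, ∀ v ∈ S, key u < key v → en u + ν v ≤ en v := by
    intro u hu v hv huv
    have hCm := hCmono u hu v hv huv
    have h1 := hCpos u hu
    have h2 := hCpos v hv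
    have := aux_gap B e ⟨C u - 1, hidx u hu⟩ ⟨C v - 1, hidx v hv⟩ (by simp; omega)
    rw [henval u hu, henval v hv]
    simp only [Fin.val_mk] at this
    omega
  -- the new schedule
  set P : Fin U → ℕ → Prop := fun u t => en u + 1 ≤ t + ν u ∧ t ≤ en u with hPdef
  have hPuniq : ∀ u ∈ S, ∀ v ∈ S, ∀ t, P u t → P v t → u = v := by
    intro u hu v hv t hPu hPv
    by_contra huv
    have hne : key u ≠ key v := fun h => huv (keyinj u v h)
    rcases lt_or_gt_of_ne hne with h | h
    · have := hgap u hu v hv h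
      have h1 := hν v
      obtain ⟨hPu1, hPu2⟩ := hPu
      obtain ⟨hPv1, hPv2⟩ := hPv
      omega
    · have := hgap v hv u hu h
      have h1 := hν u
      obtain ⟨hPu1, hPu2⟩ := hPu
      obtain ⟨hPv1, hPv2⟩ := hPv
      omega
  set σ' : ℕ → Option (Fin U) :=
    fun t => (S.filter (fun u => P u t)).toList.head? with hσ'def
  have hmem : ∀ t u, σ' t = some u ↔ (u ∈ S ∧ P u t) := by
    intro t u
    constructor
    · intro h
      have hh : (S.filter (fun u => P u t)).toList.head? = some u := h
      have : u ∈ (S.filter (fun u => P u t)).toList :=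
        List.mem_of_mem_head? (Option.mem_def.mpr hh)
      rw [Finset.mem_toList, mem_filter] at this
      exact this
    · rintro ⟨hu, hP⟩
      have : S.filter (fun u => P u t) = {u} := by
        ext v
        rw [mem_filter, Finset.mem_singleton]
        constructor
        · rintro ⟨hv, hPv⟩
          exact hPuniq v hv u hu t hPv hP
        · rintro rfl
          exact ⟨hu, hP⟩
      rw [hσ'def]
      simp only [this, Finset.toList_singleton, List.head?]
  have hfilter_eq : ∀ u ∈ S,
      (Finset.Icc 1 T).filter (fun t => σ' t = some u)
        = Finset.Icc (en u + 1 - ν u) (en u) := by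
    intro u hu
    ext t
    rw [mem_filter, mem_Icc, mem_Icc, hmem t u]
    have h1 := hν u
    have h2 := henge u hu
    have h3 := henT u hu
    have h4 := hCν u hu
    constructor
    · rintro ⟨_, _, hP1, hP2⟩
      omega
    · rintro ⟨ha, hb⟩
      refine ⟨⟨by omega, by omega⟩, hu, by omega, by omega⟩
  refine ⟨σ', ⟨?_, ?_, ?_, ?_⟩, ?_⟩
  · -- (i)
    intro u
    constructor
    · intro hu
      refine ⟨en u, ?_, ?_⟩
      · rw [mem_Icc]; exact (henT u hu)
      · rw [hmem]
        have := hν u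
        exact ⟨hu, by omega, le_refl _⟩
    · rintro ⟨t, _, ht⟩
      exact ((hmem t u).mp ht).1
  · -- (ii)
    intro u hu
    rw [hfilter_eq u hu, Nat.card_Icc]
    have h1 := hν u
    have h2 := henge u hu
    have h4 := hCν u hu
    omega
  · -- (iii)
    intro u t _ ht
    obtain ⟨hu, _, h2⟩ := (hmem t u).mp ht
    exact le_trans h2 (hend u hu)
  · -- (iv) energy
    intro t ht
    rw [mem_Icc] at ht
    have hBfil : B.filter (· ≤ t) = (Finset.Icc 1 t).filter (fun s => σ s ≠ none) := by
      ext s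
      rw [mem_filter, hBdef, mem_filter, mem_filter, mem_Icc, mem_Icc]
      constructor
      · rintro ⟨⟨⟨h1, _⟩, h2⟩, h3⟩
        exact ⟨⟨h1, h3⟩, h2⟩
      · rintro ⟨⟨h1, h2⟩, h3⟩
        exact ⟨⟨⟨h1, by omega⟩, h3⟩, h2⟩
    have hkey : ((Finset.Icc 1 t).filter (fun s => σ' s ≠ none)).card
        ≤ (B.filter (· ≤ t)).card := by
      have hm : 0 < B.card := by
        have := hidx u0 hu0; omega
      refine Finset.card_le_card_of_injOn
        (fun s => (e ⟨min (C ((σ' s).getD u0) - 1 - (en ((σ' s).getD u0) - s)) (B.card - 1),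
          by omega⟩ : ℕ)) ?_ ?_
      · -- maps to
        intro s hs
        rw [Finset.mem_coe, mem_filter, mem_Icc] at hs
        obtain ⟨⟨hs1, hs2⟩, hs3⟩ := hs
        obtain ⟨u, hu⟩ := Option.ne_none_iff_exists'.mp hs3
        obtain ⟨huS, hP1, hP2⟩ := (hmem s u).mp hu
        have hgetD : (σ' s).getD u0 = u := by rw [hu]; rfl
        dsimp only
        simp only [hgetD]
        have hidxu := hidx u huS
        have hj : en u - s ≤ ν u - 1 := by have := hν u; omega
        have hjC : en u - s ≤ C u - 1 := by
          have := hCν u huS; have := hCpos u huS; omega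
        have hmin : min (C u - 1 - (en u - s)) (B.card - 1) = C u - 1 - (en u - s) := by
          have := hCle u; omega
        rw [Finset.mem_coe, mem_filter]
        constructor
        · exact (e _).2
        · -- value ≤ s ≤ t
          have := aux_gap B e ⟨min (C u - 1 - (en u - s)) (B.card - 1), by omega⟩
            ⟨C u - 1, hidxu⟩ (by simp only [Fin.val_mk]; omega)
          rw [← henval u huS] at this
          simp only [Fin.val_mk, hmin] at this ⊢
          omega
      · -- injective
        intro s hs s' hs' hff
        simp only [Set.mem_setOf_eq, Finset.coe_filter, mem_Icc] at hs hs'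
        obtain ⟨⟨hs1, hs2⟩, hs3⟩ := hs
        obtain ⟨⟨hs1', hs2'⟩, hs3'⟩ := hs'
        obtain ⟨u, hu⟩ := Option.ne_none_iff_exists'.mp hs3
        obtain ⟨v, hv⟩ := Option.ne_none_iff_exists'.mp hs3'
        obtain ⟨huS, hP1, hP2⟩ := (hmem s u).mp hu
        obtain ⟨hvS, hQ1, hQ2⟩ := (hmem s' v).mp hv
        have hgu : (σ' s).getD u0 = u := by rw [hu]; rfl
        have hgv : (σ' s').getD u0 = v := by rw [hv]; rfl
        dsimp only at hff
        have heinj := (e.injective (Subtype.ext hff))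
        rw [Fin.mk.injEq] at heinj
        rw [hgu, hgv] at heinj
        have hminu : min (C u - 1 - (en u - s)) (B.card - 1) = C u - 1 - (en u - s) :=
          min_eq_left (by have := hCle u; have := hCpos u huS; omega)
        have hminv : min (C v - 1 - (en v - s')) (B.card - 1) = C v - 1 - (en v - s') :=
          min_eq_left (by have := hCle v; have := hCpos v hvS; omega)
        rw [hminu, hminv] at heinj
        have hνu := hν u
        have hνv := hν v
        have hCu := hCpos u huS
        have hCv := hCpos v hvS
        have hCleu := hCle u
        have hClev := hCle v
        have hCνu := hCν u huS
        have hCνv := hCν v hvS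
        by_cases huv : u = v
        · subst huv
          omega
        · exfalso
          have hne : key u ≠ key v := fun h => huv (keyinj u v h)
          rcases lt_or_gt_of_ne hne with h | h
          · have := hCmono u huS v hvS h
            omega
          · have := hCmono v hvS u huS h
            omega
    rw [hBfil] at hkey
    exact le_trans hkey (hen t (mem_Icc.mpr ht))
  · -- non-preemptive
    intro u hu
    exact ⟨en u + 1 - ν u, en u, hfilter_eq u hu⟩
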